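/- Assume h21 > (b+b')·h22. Then the supremum of b'·h11·w1 − a'·h21·w2 over all (w1,w2) with 0 < w1 ≤ W1, 0 < w2 ≤ W2, b'·h11·w1 − a'·h21·w2 ≤ h22·w2, (b+b')·h11·w1 ≤ (a+a')·h21·w2, and a'·h21·w2 ≤ b'·h11·w1, equals min{ b'·h11·h22·W1/(a'·h21 + h22) , h22·W2 }, and the supremum is attained. -/

import Mathlib

set_option maxHeartbeats 1000000 in
/-- Case 1 of Sub-problem 1 (`h21 > (b+b')·h22`): the supremum of
`b'·h11·w1 − a'·h21·w2` over the constrained set equals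
min{ b'·h11·h22·W1/(a'·h21 + h22) , h22·W2 }`, and it is attained. -/
theorem subproblem1_case1_strong (a b a2 b2 : ℕ) (ha : 1 ≤ a) (hb2 : 1 ≤ b2)
    (huni : (a : ℤ) * b2 - (a2 : ℤ) * b = 1)
    (h11 h21 h22 W1 W2 : ℝ)
    (h11p : 0 < h11) (h21p : 0 < h21) (h22p : 0 < h22)
    (hW1 : 0 < W1) (hW2 : 0 < W2)
    (hcross : ((b : ℝ) + b2) * h22 < h21) :
    IsGreatest {v : ℝ | ∃ w1 w2 : ℝ, 0 < w1 ∧ w1 ≤ W1 ∧ 0 < w2 ∧ w2 ≤ W2 ∧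
        (b2 : ℝ) * h11 * w1 - (a2 : ℝ) * h21 * w2 ≤ h22 * w2 ∧
        ((b : ℝ) + b2) * h11 * w1 ≤ ((a : ℝ) + a2) * h21 * w2 ∧
        (a2 : ℝ) * h21 * w2 ≤ (b2 : ℝ) * h11 * w1 ∧
        v = (b2 : ℝ) * h11 * w1 - (a2 : ℝ) * h21 * w2}
      (min ((b2 : ℝ) * h11 * h22 * W1 / ((a2 : ℝ) * h21 + h22)) (h22 * W2)) := by
  have ha2 : (0:ℝ) ≤ (a2:ℝ) := Nat.cast_nonneg _
  have hb2R : (1:ℝ) ≤ (b2:ℝ) := by exact_mod_cast hb2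
  have hb2p : (0:ℝ) < (b2:ℝ) := lt_of_lt_of_le one_pos hb2R
  have hD : (0:ℝ) < (a2:ℝ) * h21 + h22 := by positivity
  have hDne : ((a2:ℝ) * h21 + h22) ≠ 0 := ne_of_gt hD
  have hid : ((a:ℝ) + a2) * b2 = ((b:ℝ) + b2) * a2 + 1 := by
    have h : ((a:ℝ)) * b2 - (a2:ℝ) * b = 1 := by exact_mod_cast huni
    nlinarith [h]
  have hkey : ((b:ℝ) + b2) * ((a2:ℝ) * h21 + h22) ≤ ((a:ℝ) + a2) * b2 * h21 := by
    nlinarith [hcross.le, h21p.le]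
  constructor
  · -- membership: attained
    rcases le_total ((b2 : ℝ) * h11 * h22 * W1 / ((a2 : ℝ) * h21 + h22)) (h22 * W2) with hc | hc
    · rw [min_eq_left hc]
      set w2 := (b2:ℝ) * h11 * W1 / ((a2:ℝ) * h21 + h22) with hw2
      have hw2pos : 0 < w2 := by positivity
      have hw2val : w2 * ((a2:ℝ) * h21 + h22) = (b2:ℝ) * h11 * W1 := by
        rw [hw2, div_mul_cancel₀ _ hDne]
      have hw2le : w2 ≤ W2 := by
        have h1 : h22 * w2 ≤ h22 * W2 := by
          rw [div_le_iff₀ hD] at hc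
          nlinarith [hc]
        exact (mul_le_mul_iff_right₀ h22p).mp h1
      refine ⟨W1, w2, hW1, le_refl _, hw2pos, hw2le, ?_, ?_, ?_, ?_⟩
      · nlinarith [hw2val]
      · -- mediant constraint
        have h2 : ((b:ℝ) + b2) * ((a2:ℝ) * h21 + h22) * w2 ≤ ((a:ℝ) + a2) * b2 * h21 * w2 :=
          mul_le_mul_of_nonneg_right hkey hw2pos.le
        nlinarith [h2, hw2val]
      · nlinarith [hw2val, mul_pos h22p hw2pos]
      · rw [hw2]; field_simp; ring
    · rw [min_eq_right hc]
      set w1 := ((a2:ℝ) * h21 + h22) * W2 / ((b2:ℝ) * h11) with hw1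
      have hw1pos : 0 < w1 := by positivity
      have hw1val : w1 * ((b2:ℝ) * h11) = ((a2:ℝ) * h21 + h22) * W2 := by
        rw [hw1, div_mul_cancel₀ _ (by positivity)]
      have hw1le : w1 ≤ W1 := by
        rw [le_div_iff₀ hD] at hc
        rw [hw1, div_le_iff₀ (by positivity : (0:ℝ) < (b2:ℝ) * h11)]
        nlinarith [hc]
      refine ⟨w1, W2, hw1pos, hw1le, hW2, le_refl _, ?_, ?_, ?_, ?_⟩
      · nlinarith [hw1val]
      · have h2 : ((b:ℝ) + b2) * ((a2:ℝ) * h21 + h22) * W2 ≤ ((a:ℝ) + a2) * b2 * h21 * W2 :=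
          mul_le_mul_of_nonneg_right hkey hW2.le
        nlinarith [h2, hw1val]
      · nlinarith [hw1val, mul_pos h22p hW2]
      · nlinarith [hw1val]
  · -- upper bound
    rintro v ⟨w1, w2, hw1p, hw1le, hw2p, hw2le, c1, c2, c3, rfl⟩
    apply le_min
    · rw [le_div_iff₀ hD]
      nlinarith [mul_le_mul_of_nonneg_left c1 (mul_nonneg ha2 h21p.le),
        mul_le_mul_of_nonneg_left hw1le (mul_nonneg (mul_nonneg hb2p.le h11p.le) h22p.le)]
    · calc (b2:ℝ) * h11 * w1 - (a2:ℝ) * h21 * w2 ≤ h22 * w2 := c1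
        _ ≤ h22 * W2 := by nlinarith
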